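/- Let k be a positive integer and s ≥ 2 an even integer. Then ρ_{k,0}(2^s) = (Σ_{i=0}^{(s−4)/2} 2^{ki + (s−2i−3)(k−1)}) · (ρ_{k,0}(8) − 2^{2k−1}) + 2^{k(s−2)/2} · (ρ_{k,0}(4) − 2^k) + 2^{k·s/2}, where the sum is empty when s = 2. -/

import Mathlib

/-- `rho k lam n` is the number of `k`-tuples `(x₁,…,x_k) ∈ (ℤ/nℤ)^k` with
`x₁² + ⋯ + x_k² ≡ lam (mod n)`. -/
noncomputable def rho (k : ℕ) (lam : ℤ) (n : ℕ) : ℕ :=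
  Nat.card {x : Fin k → ZMod n // ∑ i, x i ^ 2 = (lam : ZMod n)}

lemma aux_count (a b r : ℕ) (hb : 0 < b) (hr : r < a) :
    Nat.card {x : ZMod (a*b) // x.val % a = r} = b := by
  have hab : 0 < a * b := Nat.mul_pos (Nat.pos_of_ne_zero (by omega)) hb
  haveI : NeZero (a*b) := ⟨hab.ne'⟩
  have e : {x : ZMod (a*b) // x.val % a = r} ≃ Fin b := {
    toFun := fun x => ⟨x.1.val / a, by
      have := ZMod.val_lt x.1
      have hx := x.2
      rcases Nat.eq_zero_or_pos a with h|h
      · omega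
      · exact Nat.div_lt_of_lt_mul this ⟩
    invFun := fun t => ⟨((r + a * t.1 : ℕ) : ZMod (a*b)), by
      have hlt : r + a * t.1 < a * b := by
        have := t.2
        calc r + a * t.1 < a + a * t.1 := by omega
        _ = a * (t.1+1) := by ring
        _ ≤ a * b := Nat.mul_le_mul_left a (by omega)
      rw [ZMod.val_natCast, Nat.mod_eq_of_lt hlt]
      simp [Nat.add_mul_mod_self_left, Nat.mod_eq_of_lt hr]⟩
    left_inv := fun x => by
      apply Subtype.ext
      apply ZMod.val_injective
      have hx := x.2
      rw [ZMod.val_natCast]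
      have : r + a * (x.1.val / a) = x.1.val := by
        conv_rhs => rw [← Nat.div_add_mod x.1.val a]
        omega
      rw [this, Nat.mod_eq_of_lt (ZMod.val_lt x.1)]
    right_inv := fun t => by
      apply Fin.ext
      simp only
      have hlt : r + a * t.1 < a * b := by
        have := t.2
        calc r + a * t.1 < a + a * t.1 := by omega
        _ = a * (t.1+1) := by ring
        _ ≤ a * b := Nat.mul_le_mul_left a (by omega)
      rw [ZMod.val_natCast, Nat.mod_eq_of_lt hlt]
      rw [Nat.add_mul_div_left _ _ (by omega : 0 < a), Nat.div_eq_of_lt hr]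
      omega }
  rw [Nat.card_congr e, Nat.card_eq_fintype_card, Fintype.card_fin]

lemma card_comp {M N : Type*} [Fintype M] [Fintype N] (f : M → N) (P : N → Prop)
    (c : ℕ) (hf : ∀ y, P y → Nat.card {x // f x = y} = c) :
    Nat.card {x // P (f x)} = c * Nat.card {y // P y} := by
  classical
  have e : {x // P (f x)} ≃ Σ y : {y // P y}, {x // f x = y.1} := {
    toFun := fun x => ⟨⟨f x.1, x.2⟩, ⟨x.1, rfl⟩⟩
    invFun := fun p => ⟨p.2.1, by rw [p.2.2]; exact p.1.2⟩
    left_inv := fun x => rfl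
    right_inv := fun p => by
      obtain ⟨⟨y, hy⟩, ⟨x, hx⟩⟩ := p
      refine Sigma.ext (Subtype.ext hx) ?_
      exact (Subtype.heq_iff_coe_eq (fun x' => by dsimp only; rw [hx])).mpr rfl }
  rw [Nat.card_congr e, Nat.card_eq_fintype_card, Fintype.card_sigma]
  rw [Finset.sum_congr rfl (fun y _ => ?_), Finset.sum_const, Finset.card_univ,
    Nat.card_eq_fintype_card, smul_eq_mul, mul_comm]
  rw [← Nat.card_eq_fintype_card]
  exact hf y.1 y.2

lemma card_fiber_pi {k : ℕ} {M N : Type*} [Fintype M] [DecidableEq N] (g : M → N) (c : ℕ)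
    (y : Fin k → N) (h : ∀ i, Nat.card {x // g x = y i} = c) :
    Nat.card {x : Fin k → M // (fun i => g (x i)) = y} = c ^ k := by
  have e1 : {x : Fin k → M // (fun i => g (x i)) = y} ≃ {x : Fin k → M // ∀ i, g (x i) = y i} :=
    Equiv.subtypeEquivRight (fun x => funext_iff)
  rw [Nat.card_congr (e1.trans (Equiv.subtypePiEquivPi (p := fun i b => g b = y i))), Nat.card_pi]
  simp only [h, Finset.prod_const, Finset.card_univ, Fintype.card_fin]

lemma A_one (k : ℕ) : Nat.card {x : Fin k → ZMod 1 // ∑ i, x i ^ 2 = 0} = 1 := by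
  haveI : Nonempty {x : Fin k → ZMod 1 // ∑ i, x i ^ 2 = 0} := ⟨⟨fun _ => 0, by simp⟩⟩
  haveI : Subsingleton {x : Fin k → ZMod 1 // ∑ i, x i ^ 2 = 0} := inferInstance
  exact Nat.card_eq_one_iff_unique.mpr ⟨inferInstance, inferInstance⟩

lemma A_two (k : ℕ) (hk : 0 < k) :
    Nat.card {x : Fin k → ZMod 2 // ∑ i, x i ^ 2 = 0} = 2 ^ (k - 1) := by
  obtain ⟨m, rfl⟩ : ∃ m, k = m + 1 := ⟨k - 1, by omega⟩
  have hsq : ∀ x : ZMod 2, x ^ 2 = x := by decide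
  have key : ∀ x : Fin (m+1) → ZMod 2, (∑ i, x i ^ 2) = (∑ i : Fin m, x i.castSucc) + x (Fin.last m) := by
    intro x
    rw [Fin.sum_univ_castSucc]
    simp [hsq]
  have e : {x : Fin (m+1) → ZMod 2 // ∑ i, x i ^ 2 = 0} ≃ (Fin m → ZMod 2) := {
    toFun := fun x i => x.1 i.castSucc
    invFun := fun u => ⟨Fin.snoc u (-∑ i, u i), by
      rw [key]
      simp [Fin.snoc_castSucc, Fin.snoc_last]
      exact CharTwo.add_self_eq_zero _⟩
    left_inv := fun x => by
      apply Subtype.ext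
      funext i
      refine Fin.lastCases ?_ (fun j => ?_) i
      · simp only [Fin.snoc_last]
        have hx := x.2
        rw [key] at hx
        have : x.1 (Fin.last m) = -∑ i : Fin m, x.1 i.castSucc := by
          rw [eq_neg_iff_add_eq_zero, add_comm]; exact hx
        rw [this]
      · simp only [Fin.snoc_castSucc]
    right_inv := fun u => funext fun i => by simp [Fin.snoc_castSucc] }
  rw [Nat.card_congr e, Nat.card_pi]
  simp [Nat.card_zmod]

lemma aux_count' {a b n : ℕ} (h : n = a * b) (hb : 0 < b) (r : ℕ) (hr : r < a) :
    Nat.card {x : ZMod n // x.val % a = r} = b := by subst h; exact aux_count a b r hb hr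

-- val cast self
lemma val_cast_self {n : ℕ} [NeZero n] (w : ZMod n) : ((w.val : ℕ) : ZMod n) = w := by
  rw [ZMod.natCast_val, ZMod.cast_id]

lemma card_fiber_cast {a b n : ℕ} (h : n = a * b) (ha : 0 < a) (hb : 0 < b) (y : ZMod a) :
    Nat.card {x : ZMod n // ((x.val : ℕ) : ZMod a) = y} = b := by
  subst h
  haveI : NeZero a := ⟨ha.ne'⟩
  have key : ∀ x : ZMod (a*b), (((x.val : ℕ) : ZMod a) = y) ↔ x.val % a = y.val := by
    intro x
    constructor
    · intro hh; rw [← hh, ZMod.val_natCast]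
    · intro hh; apply ZMod.val_injective; rw [ZMod.val_natCast, hh]
  rw [Nat.card_congr (Equiv.subtypeEquivRight key)]
  exact aux_count a b y.val hb (ZMod.val_lt y)

lemma card_cast_pred {k a b n : ℕ} (h : n = a * b) (ha : 0 < a) (hb : 0 < b)
    (P : (Fin k → ZMod a) → Prop) :
    Nat.card {x : Fin k → ZMod n // P (fun i => (((x i).val : ℕ) : ZMod a))} =
      b ^ k * Nat.card {y : Fin k → ZMod a // P y} := by
  haveI : NeZero a := ⟨ha.ne'⟩
  haveI : NeZero n := ⟨by subst h; exact (Nat.mul_pos ha hb).ne'⟩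
  classical
  have := card_comp (M := Fin k → ZMod n) (N := Fin k → ZMod a)
    (fun x => fun i => (((x i).val : ℕ) : ZMod a)) P (b ^ k) ?_
  · exact this
  · intro y _
    exact card_fiber_pi (fun v : ZMod n => ((v.val : ℕ) : ZMod a)) b y
      (fun i => card_fiber_cast h ha hb (y i))

lemma fiber_two {t n : ℕ} (h : n = 2^t * 4) (e : ZMod n) (he : ((e.val : ℕ) : ZMod 2) = 0) :
    Nat.card {v : ZMod n // 2 * v = e} = 2 := by
  haveI : NeZero n := ⟨by subst h; positivity⟩
  have h2 : (2:ℕ) ∣ e.val := (ZMod.natCast_eq_zero_iff e.val 2).mp he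
  obtain ⟨m, hm⟩ := h2
  have hmlt : m < 2^t * 2 := by
    have := ZMod.val_lt e
    omega
  have key : ∀ v : ZMod n, (2 * v = e) ↔ v.val % (2^t*2) = m := by
    intro v
    rw [show (2 * v : ZMod n) = ((2 * v.val : ℕ) : ZMod n) by push_cast [val_cast_self]; ring,
      show e = ((e.val : ℕ) : ZMod n) from (val_cast_self e).symm,
      ZMod.natCast_eq_natCast_iff]
    unfold Nat.ModEq
    rw [hm]
    generalize v.val = a
    rw [show n = 2*(2^t*2) by omega, Nat.mul_mod_mul_left, Nat.mul_mod_mul_left,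
      Nat.mod_eq_of_lt hmlt]
    omega
  rw [Nat.card_congr (Equiv.subtypeEquivRight key)]
  exact aux_count' (by omega : n = (2^t*2)*2) (by omega) m hmlt

lemma two_mul_val_even {n : ℕ} [NeZero n] (hn : 2 ∣ n) (v : ZMod n) :
    (((2 * v : ZMod n).val : ℕ) : ZMod 2) = 0 := by
  rw [show (2 * v : ZMod n) = ((2 * v.val : ℕ) : ZMod n) by push_cast [val_cast_self]; ring]
  rw [ZMod.val_natCast]
  rw [ZMod.natCast_eq_zero_iff]
  exact (Nat.dvd_mod_iff hn).mpr ⟨v.val, rfl⟩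

lemma cast_sum_sq {k n m : ℕ} [NeZero n] (hd : m ∣ n) (x : Fin k → ZMod n) :
    (((∑ i, x i ^ 2).val : ℕ) : ZMod m) = ∑ i, (((x i).val : ℕ) : ZMod m) ^ 2 := by
  have hc : ∀ w : ZMod n, ((w.val : ℕ) : ZMod m) = ZMod.castHom hd (ZMod m) w := fun w => by
    rw [ZMod.castHom_apply, ZMod.natCast_val]
  rw [hc]
  simp only [map_sum, map_pow]
  exact Finset.sum_congr rfl fun i _ => by rw [hc]

lemma four_mul_eq_zero_iff {t n : ℕ} (h : n = 2^t * 4) (w : ZMod n) :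
    4 * w = 0 ↔ ((w.val : ℕ) : ZMod (2^t)) = 0 := by
  haveI : NeZero n := ⟨by subst h; positivity⟩
  rw [show (4 * w : ZMod n) = ((4 * w.val : ℕ) : ZMod n) by push_cast [val_cast_self]; ring,
    ZMod.natCast_eq_zero_iff, ZMod.natCast_eq_zero_iff]
  generalize w.val = a
  rw [h, show 2^t*4 = 4*2^t by ring]
  exact Nat.mul_dvd_mul_iff_left (by norm_num)

set_option maxHeartbeats 1000000 in
lemma even_part (k t n : ℕ) (h : n = 2^t * 4) :
    Nat.card {x : Fin k → ZMod n // (∑ i, x i ^ 2 = 0) ∧ ∀ i, (((x i).val : ℕ) : ZMod 2) = 0}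
      = 2^k * Nat.card {y : Fin k → ZMod (2^t) // ∑ i, y i ^ 2 = 0} := by
  haveI : NeZero n := ⟨by subst h; positivity⟩
  classical
  have hc := card_cast_pred (k := k) h (pow_pos two_pos t) (by norm_num : (0:ℕ) < 4)
    (fun y => ∑ i, y i ^ 2 = 0)
  have e : ∀ u : Fin k → ZMod n, (∑ i, (2*u i)^2 = 0) ↔
      (∑ i, (((u i).val : ℕ) : ZMod (2^t)) ^ 2 = 0) := by
    intro u
    have h4 : ∑ i, (2*u i)^2 = 4 * ∑ i, u i ^2 := by
      rw [Finset.mul_sum]; exact Finset.sum_congr rfl fun i _ => by ring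
    rw [h4, four_mul_eq_zero_iff h,
      cast_sum_sq (show (2^t : ℕ) ∣ n from h ▸ Dvd.intro 4 rfl)]
  have s1 : Nat.card {u : Fin k → ZMod n // ∑ i, (2 * u i)^2 = 0}
      = 4^k * Nat.card {y : Fin k → ZMod (2^t) // ∑ i, y i ^ 2 = 0} := by
    rw [Nat.card_congr (Equiv.subtypeEquivRight e)]
    exact hc
  have hP : ∀ u : Fin k → ZMod n,
      (∑ i, (2 * u i)^2 = 0) ↔
      ((∑ i, (fun j => 2 * u j) i ^ 2 = 0) ∧
        ∀ i, ((((fun j => 2 * u j) i).val : ℕ) : ZMod 2) = 0) := by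
    intro u
    simp only
    exact ⟨fun hh => ⟨hh, fun i => two_mul_val_even (show (2:ℕ) ∣ n by rw [h]; exact ⟨2^t*2, by ring⟩) (u i)⟩,
      fun hh => hh.1⟩
  have s2 : Nat.card {u : Fin k → ZMod n // ∑ i, (2 * u i)^2 = 0}
      = 2^k * Nat.card {x : Fin k → ZMod n //
          (∑ i, x i ^ 2 = 0) ∧ ∀ i, (((x i).val : ℕ) : ZMod 2) = 0} := by
    rw [Nat.card_congr (Equiv.subtypeEquivRight hP)]
    exact card_comp (fun u : Fin k → ZMod n => fun j => 2 * u j)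
      (fun x => (∑ i, x i ^ 2 = 0) ∧ ∀ i, (((x i).val : ℕ) : ZMod 2) = 0) (2^k)
      (fun y hy => card_fiber_pi (fun v : ZMod n => 2 * v) 2 y
        (fun i => fiber_two h (y i) (hy.2 i)))
  have h4k : (4:ℕ)^k = 2^k * 2^k := by rw [show (4:ℕ) = 2*2 by norm_num, Nat.mul_pow]
  rw [s2, h4k] at s1
  exact Nat.eq_of_mul_eq_mul_left (pow_pos two_pos k) (by rw [s1]; ring)

lemma cast_down {n m : ℕ} [NeZero n] (hmn : m ∣ n) (w : ZMod n) :
    ((w.val : ℕ) : ZMod m) = ZMod.castHom hmn (ZMod m) w := by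
  rw [ZMod.castHom_apply, ZMod.natCast_val]

lemma sq_congr {n m : ℕ} [NeZero n] (hmn : m ∣ n) (hm2 : n ∣ 2*m) (hmm : n ∣ m*m)
    (a b : ZMod n) (h : ((a.val : ℕ) : ZMod m) = ((b.val : ℕ) : ZMod m)) : a^2 = b^2 := by
  have hκ : m ∣ (a - b).val := by
    rw [← ZMod.natCast_eq_zero_iff]
    rw [cast_down hmn, map_sub, ← cast_down hmn, ← cast_down hmn, h, sub_self]
  obtain ⟨q, hq⟩ := hκ
  have hab : a = b + ((m*q : ℕ) : ZMod n) := by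
    calc a = b + (a - b) := by ring
    _ = b + ((m*q : ℕ) : ZMod n) := by rw [← hq, val_cast_self]
  have h2 : (2 * ((m*q : ℕ) : ZMod n)) = 0 := by
    rw [show (2 * ((m*q:ℕ) : ZMod n)) = ((2*(m*q) : ℕ) : ZMod n) by push_cast; ring,
      ZMod.natCast_eq_zero_iff]
    rw [← mul_assoc]
    exact hm2.mul_right q
  have hsq : (((m*q : ℕ) : ZMod n))^2 = 0 := by
    rw [show ((((m*q:ℕ) : ZMod n))^2 : ZMod n) = (((m*q)^2 : ℕ) : ZMod n) by push_cast; ring,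
      ZMod.natCast_eq_zero_iff]
    calc n ∣ m*m := hmm
    _ ∣ (m*q)^2 := ⟨q*q, by ring⟩
  rw [hab]
  linear_combination b * h2 + hsq

set_option maxHeartbeats 1000000 in
lemma lift_part (k t n m : ℕ) (hn : n = 2^t*4) (hm : m = 2^t*2) :
    Nat.card {x : Fin k → ZMod n //
        (∑ i, x i ^ 2 = 0) ∧ ¬∀ i, (((x i).val : ℕ) : ZMod 2) = 0}
      = 2^k * Nat.card {y : Fin k → ZMod m //
          (∑ i, (((y i).val : ℕ) : ZMod n) ^ 2 = 0) ∧
            ¬∀ i, (((y i).val : ℕ) : ZMod 2) = 0} := by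
  haveI : NeZero n := ⟨by subst hn; positivity⟩
  haveI : NeZero m := ⟨by subst hm; positivity⟩
  classical
  obtain ⟨T, hT, hT0⟩ : ∃ T, (2:ℕ)^t = T ∧ 0 < T := ⟨2^t, rfl, pow_pos two_pos t⟩
  rw [hT] at hn hm
  have hm0 : 0 < m := by omega
  have hmn : m ∣ n := ⟨2, by omega⟩
  have hm2 : n ∣ 2*m := ⟨1, by omega⟩
  have hmm : n ∣ m*m := ⟨T, by subst hn hm; ring⟩
  have hvv : ∀ x : ZMod n, ((((((x.val : ℕ) : ZMod m)).val : ℕ) : ZMod n)).val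
      = x.val % m := by
    intro x
    rw [ZMod.val_natCast, ZMod.val_natCast]
    exact Nat.mod_eq_of_lt (lt_of_lt_of_le (Nat.mod_lt _ hm0) (by omega))
  -- per coordinate: lift (castdown x) squared = x squared
  have hsq : ∀ x : ZMod n, ((((((x.val : ℕ) : ZMod m)).val : ℕ) : ZMod n))^2 = x^2 := by
    intro x
    apply sq_congr hmn hm2 hmm
    rw [hvv x, ZMod.natCast_eq_natCast_iff]
    exact Nat.mod_mod_of_dvd x.val dvd_rfl
  -- parity
  have hpar : ∀ x : ZMod n, (((((((x.val : ℕ) : ZMod m)).val : ℕ)) : ZMod 2))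
      = ((x.val : ℕ) : ZMod 2) := by
    intro x
    rw [ZMod.val_natCast, ZMod.natCast_eq_natCast_iff]
    exact Nat.mod_mod_of_dvd x.val ⟨T, by omega⟩
  have key := card_cast_pred (k := k) (show n = m * 2 by omega) hm0 (by norm_num)
    (fun y : Fin k → ZMod m =>
      (∑ i, (((y i).val : ℕ) : ZMod n) ^ 2 = 0) ∧ ¬∀ i, (((y i).val : ℕ) : ZMod 2) = 0)
  have e : ∀ x : Fin k → ZMod n,
      ((∑ i, x i ^ 2 = 0) ∧ ¬∀ i, (((x i).val : ℕ) : ZMod 2) = 0) ↔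
      ((fun y : Fin k → ZMod m =>
        (∑ i, (((y i).val : ℕ) : ZMod n) ^ 2 = 0) ∧ ¬∀ i, (((y i).val : ℕ) : ZMod 2) = 0)
        (fun i => (((x i).val : ℕ) : ZMod m))) := by
    intro x
    simp only
    rw [Finset.sum_congr rfl (fun i _ => hsq (x i))]
    constructor
    · rintro ⟨h1, h2⟩
      exact ⟨h1, fun hc => h2 (fun i => by rw [← hpar (x i)]; exact hc i)⟩
    · rintro ⟨h1, h2⟩
      exact ⟨h1, fun hc => h2 (fun i => by rw [hpar (x i)]; exact hc i)⟩
  rw [Nat.card_congr (Equiv.subtypeEquivRight e)]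
  exact key

lemma card_split {M : Type*} [Fintype M] (p q : M → Prop) [DecidablePred p] [DecidablePred q] :
    Nat.card {x // p x} = Nat.card {x // p x ∧ q x} + Nat.card {x // p x ∧ ¬ q x} := by
  simp only [Nat.card_eq_fintype_card, Fintype.card_subtype]
  rw [← Finset.filter_filter, ← Finset.filter_filter]
  exact (Finset.card_filter_add_card_filter_not (s := Finset.univ.filter p) q).symm

lemma min'_congr_aux {α : Type*} [LinearOrder α] (s t : Finset α) (hs : s.Nonempty)
    (ht : t.Nonempty) (h : s = t) : s.min' hs = t.min' ht := by subst h; rfl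

set_option maxHeartbeats 2000000 in
lemma halve (k t n m : ℕ) (hn : n = 2^t*16) (hm : m = 2^t*8) :
    Nat.card {y : Fin k → ZMod m //
        (∑ i, y i ^ 2 = 0) ∧ ¬∀ i, (((y i).val : ℕ) : ZMod 2) = 0}
      = 2 * Nat.card {y : Fin k → ZMod m //
          (∑ i, (((y i).val : ℕ) : ZMod n) ^ 2 = 0) ∧
            ¬∀ i, (((y i).val : ℕ) : ZMod 2) = 0} := by
  obtain ⟨T, hT, hT0⟩ : ∃ T, (2:ℕ)^t = T ∧ 0 < T := ⟨2^t, rfl, pow_pos two_pos t⟩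
  rw [hT] at hn hm
  haveI : NeZero n := ⟨by omega⟩
  haveI : NeZero m := ⟨by omega⟩
  have hm0 : 0 < m := by omega
  have hmn : m ∣ n := ⟨2, by omega⟩
  have hm2 : n ∣ 2*m := ⟨1, by omega⟩
  have hmm : n ∣ m*m := ⟨T*4, by subst hn hm; ring⟩
  classical
  set Od : (Fin k → ZMod m) → Prop :=
    fun y => ¬∀ i, (((y i).val : ℕ) : ZMod 2) = 0 with hOd
  set V : (Fin k → ZMod m) → ZMod n :=
    fun y => ∑ i, (((y i).val : ℕ) : ZMod n) ^ 2 with hV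
  set c : ZMod m := ((T*4 : ℕ) : ZMod m) with hc
  set κ : ZMod n := ((T*8 : ℕ) : ZMod n) with hκ
  have hcval : c.val = T*4 := by
    rw [hc, ZMod.val_natCast]; exact Nat.mod_eq_of_lt (by omega)
  have hκval : κ.val = T*8 := by
    rw [hκ, ZMod.val_natCast]; exact Nat.mod_eq_of_lt (by omega)
  have hκne : κ ≠ 0 := by
    intro h; rw [h, ZMod.val_zero] at hκval; omega
  have hκκ : κ + κ = 0 := by
    rw [hκ, show ((T*8:ℕ) : ZMod n) + ((T*8:ℕ) : ZMod n) = ((T*16 : ℕ) : ZMod n) by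
      push_cast; ring, ZMod.natCast_eq_zero_iff]
    exact ⟨1, by omega⟩
  -- lift val
  have f0 : ∀ w : ZMod m, ((((w.val : ℕ) : ZMod n)).val) = w.val := by
    intro w
    rw [ZMod.val_natCast]
    exact Nat.mod_eq_of_lt (lt_of_lt_of_le (ZMod.val_lt w) (by omega))
  -- cast down of V
  have f1 : ∀ y : Fin k → ZMod m, (((V y).val : ℕ) : ZMod m) = ∑ i, y i ^ 2 := by
    intro y
    rw [cast_down hmn, hV]
    simp only [map_sum, map_pow]
    refine Finset.sum_congr rfl fun i _ => ?_
    rw [← cast_down hmn, f0, val_cast_self]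
  have f2' : ∀ y, V y = 0 → ∑ i, y i ^ 2 = 0 := by
    intro y h
    rw [← f1 y, h, ZMod.val_zero, Nat.cast_zero]
  have f2 : ∀ y, (∑ i, y i ^ 2 = 0) → V y = 0 ∨ V y = κ := by
    intro y h
    have hdvd : m ∣ (V y).val := by
      rw [← ZMod.natCast_eq_zero_iff, f1 y, h]
    obtain ⟨q, hq⟩ := hdvd
    have hlt : (V y).val < n := ZMod.val_lt _
    have hq2 : q < 2 := Nat.lt_of_mul_lt_mul_left (a := m) (by rw [← hq]; omega)
    have : q = 0 ∨ q = 1 := by omega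
    rcases this with h0 | h1
    · left; rw [← val_cast_self (V y), hq, h0, Nat.mul_zero, Nat.cast_zero]
    · right
      rw [← val_cast_self (V y), hq, h1, Nat.mul_one, hm, hκ]
  -- parity of addition with even element
  have fpar : ∀ w v : ZMod m, 2 ∣ v.val →
      ((((w + v).val : ℕ)) : ZMod 2) = ((w.val : ℕ) : ZMod 2) := by
    intro w v hv
    rw [show w + v = ((w.val + v.val : ℕ) : ZMod m) by push_cast [val_cast_self]; ring,
      ZMod.val_natCast, ZMod.natCast_eq_natCast_iff]
    obtain ⟨e, he⟩ := hv
    have h2m : (2:ℕ) ∣ m := ⟨T*4, by omega⟩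
    unfold Nat.ModEq
    rw [Nat.mod_mod_of_dvd _ h2m]
    omega
  have hceven : 2 ∣ c.val := by rw [hcval]; exact ⟨T*2, by ring⟩
  have h2c : (2 : ZMod m) * c = 0 := by
    rw [hc, show (2:ZMod m) * ((T*4:ℕ) : ZMod m) = ((T*8 : ℕ) : ZMod m) by push_cast; ring,
      ZMod.natCast_eq_zero_iff]
    exact ⟨1, by omega⟩
  have hc2 : c * c = 0 := by
    rw [hc, show ((T*4:ℕ) : ZMod m) * ((T*4:ℕ) : ZMod m) = (((T*4)*(T*4) : ℕ) : ZMod m) by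
      push_cast; ring, ZMod.natCast_eq_zero_iff]
    exact ⟨T*2, by subst hm; ring⟩
  set odds : (Fin k → ZMod m) → Finset (Fin k) :=
    fun y => Finset.univ.filter (fun i => (((y i).val : ℕ) : ZMod 2) ≠ 0) with hodds
  have hOdIff : ∀ y, Od y ↔ (odds y).Nonempty := by
    intro y
    rw [hOd, hodds]
    simp only [not_forall, Finset.filter_nonempty_iff, Finset.mem_univ, true_and]
  set σ : (Fin k → ZMod m) → (Fin k → ZMod m) := fun y =>
    if h : (odds y).Nonempty then
      Function.update y ((odds y).min' h) (y ((odds y).min' h) + c) else y with hσ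
  have hpar_upd : ∀ y (j : Fin k), odds (Function.update y j (y j + c)) = odds y := by
    intro y j
    ext i
    simp only [hodds, Finset.mem_filter, Finset.mem_univ, true_and]
    by_cases hij : i = j
    · subst hij
      rw [Function.update_self, fpar _ _ hceven]
    · rw [Function.update_of_ne hij]
  have hσdef : ∀ y (h : (odds y).Nonempty),
      σ y = Function.update y ((odds y).min' h) (y ((odds y).min' h) + c) := by
    intro y h
    simp only [hσ]
    rw [dif_pos h]
  have hσneg : ∀ y, ¬(odds y).Nonempty → σ y = y := by
    intro y h
    simp only [hσ]
    rw [dif_neg h]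
  have hodds_σ : ∀ y, odds (σ y) = odds y := by
    intro y
    by_cases h : (odds y).Nonempty
    · rw [hσdef y h]; exact hpar_upd _ _
    · rw [hσneg y h]
  have hσσ : ∀ y, σ (σ y) = y := by
    intro y
    by_cases h : (odds y).Nonempty
    · have hne2 : (odds (σ y)).Nonempty := by rw [hodds_σ]; exact h
      have hj : (odds (σ y)).min' hne2 = (odds y).min' h :=
        min'_congr_aux _ _ hne2 h (hodds_σ y)
      rw [hσdef (σ y) hne2, hj]
      rw [hσdef y h, Function.update_self, Function.update_idem]
      rw [show y ((odds y).min' h) + c + c = y ((odds y).min' h) by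
        rw [add_assoc, show c + c = (2:ZMod m)*c by ring, h2c, add_zero]]
      exact Function.update_eq_self _ _
    · rw [hσneg y h, hσneg y h]
  have hOd_σ : ∀ y, Od y → Od (σ y) := by
    intro y hy
    rw [hOdIff, hodds_σ]; exact (hOdIff y).mp hy
  -- sum of squares preserved mod m
  have hSp_σ : ∀ y, (∑ i, y i ^ 2 = 0) → ∑ i, (σ y) i ^ 2 = 0 := by
    intro y hy
    by_cases h : (odds y).Nonempty
    · set j := (odds y).min' h with hj
      have hσy : σ y = Function.update y j (y j + c) := hσdef y h
      rw [hσy]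
      have happ : (fun i => (Function.update y j (y j + c) i)^2)
          = Function.update (fun a => y a ^ 2) j ((y j + c)^2) := by
        funext i
        exact Function.apply_update (fun _ w => w^2) y j (y j + c) i
      calc ∑ i, (Function.update y j (y j + c) i)^2
          = ∑ i, Function.update (fun a => y a ^ 2) j ((y j + c)^2) i := by rw [happ]
        _ = (y j + c)^2 + ∑ i ∈ Finset.univ \ {j}, y i ^ 2 := by
            rw [Finset.sum_update_of_mem (Finset.mem_univ j)]
        _ = y j ^ 2 + ∑ i ∈ Finset.univ \ {j}, y i ^ 2 := by
            congr 1
            linear_combination y j * h2c + hc2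
        _ = ∑ i, y i ^ 2 := by
            rw [Finset.sdiff_singleton_eq_erase]
            exact Finset.add_sum_erase Finset.univ (fun i => y i ^ 2) (Finset.mem_univ j)
        _ = 0 := hy
    · rw [hσneg y h]; exact hy
  -- V of σ
  have hV_σ : ∀ y, Od y → V (σ y) = V y + κ := by
    intro y hy
    have h : (odds y).Nonempty := (hOdIff y).mp hy
    set j := (odds y).min' h with hj
    have hjodd : (((y j).val : ℕ) : ZMod 2) ≠ 0 := by
      have hmem := (odds y).min'_mem h
      rw [← hj] at hmem
      simp only [hodds, Finset.mem_filter] at hmem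
      exact hmem.2
    have hσy : σ y = Function.update y j (y j + c) := hσdef y h
    have happ : (fun i => ((((σ y) i).val : ℕ) : ZMod n)^2)
        = Function.update (fun a => (((y a).val : ℕ) : ZMod n) ^ 2) j
            ((((y j + c).val : ℕ) : ZMod n)^2) := by
      funext i
      rw [hσy]
      exact Function.apply_update (fun _ w => ((w.val : ℕ) : ZMod n)^2) y j (y j + c) i
    have hkey : ((((y j + c).val : ℕ) : ZMod n))^2 = (((y j).val : ℕ) : ZMod n)^2 + κ := by
      -- first: lift (y j + c) squared = (lift (y j) + lift c) squared
      have e1 : ((((y j + c).val : ℕ) : ZMod n))^2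
          = ((((y j).val : ℕ) : ZMod n) + (((c.val : ℕ)) : ZMod n))^2 := by
        apply sq_congr hmn hm2 hmm
        rw [f0]
        have : ((((((y j).val : ℕ) : ZMod n) + ((c.val : ℕ) : ZMod n)).val : ℕ) : ZMod m)
            = y j + c := by
          rw [cast_down hmn, map_add, ← cast_down hmn, ← cast_down hmn, f0, f0,
            val_cast_self, val_cast_self]
        rw [this, val_cast_self]
      rw [e1]
      -- now expand
      have hoddval : ∃ r, (y j).val = 2*r + 1 := by
        have h2 : ¬ (2 ∣ (y j).val) := by
          rw [← ZMod.natCast_eq_zero_iff]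
          exact hjodd
        exact ⟨(y j).val / 2, by omega⟩
      obtain ⟨r, hr⟩ := hoddval
      have h16T : ((T*16 : ℕ) : ZMod n) = 0 := by
        rw [ZMod.natCast_eq_zero_iff]; exact ⟨1, by omega⟩
      rw [hcval, hr, hκ]
      push_cast at h16T ⊢
      linear_combination ((r : ZMod n) + (T : ZMod n)) * h16T
    calc V (σ y) = ∑ i, (Function.update (fun a => (((y a).val : ℕ) : ZMod n) ^ 2) j
          ((((y j + c).val : ℕ) : ZMod n)^2)) i := by
            rw [hV]
            exact Finset.sum_congr rfl fun i _ => congrFun happ i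
      _ = (((y j + c).val : ℕ) : ZMod n)^2
            + ∑ i ∈ Finset.univ \ {j}, (((y i).val : ℕ) : ZMod n) ^ 2 := by
          rw [Finset.sum_update_of_mem (Finset.mem_univ j)]
      _ = κ + ((((y j).val : ℕ) : ZMod n)^2
            + ∑ i ∈ Finset.univ \ {j}, (((y i).val : ℕ) : ZMod n) ^ 2) := by
          rw [hkey]; ring
      _ = κ + V y := by
          rw [hV]
          congr 1
          rw [Finset.sdiff_singleton_eq_erase]
          exact Finset.add_sum_erase Finset.univ (fun i => (((y i).val : ℕ) : ZMod n)^2)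
            (Finset.mem_univ j)
      _ = V y + κ := by ring
  -- assemble
  rw [card_split (fun y : Fin k → ZMod m => (∑ i, y i ^ 2 = 0) ∧ Od y) (fun y => V y = 0)]
  have eR : ∀ y : Fin k → ZMod m,
      (((∑ i, y i ^ 2 = 0) ∧ Od y) ∧ V y = 0) ↔
      ((∑ i, (((y i).val : ℕ) : ZMod n) ^ 2 = 0) ∧ Od y) := by
    intro y
    constructor
    · rintro ⟨⟨_, h2⟩, h3⟩; exact ⟨h3, h2⟩
    · rintro ⟨h1, h2⟩; exact ⟨⟨f2' y h1, h2⟩, h1⟩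
  have e2 : {y : Fin k → ZMod m // ((∑ i, y i ^ 2 = 0) ∧ Od y) ∧ V y = 0}
      ≃ {y : Fin k → ZMod m // ((∑ i, y i ^ 2 = 0) ∧ Od y) ∧ ¬ V y = 0} := {
    toFun := fun x => ⟨σ x.1, ⟨⟨hSp_σ _ x.2.1.1, hOd_σ _ x.2.1.2⟩, by
      rw [hV_σ _ x.2.1.2, x.2.2, zero_add]; exact hκne⟩⟩
    invFun := fun x => ⟨σ x.1, ⟨⟨hSp_σ _ x.2.1.1, hOd_σ _ x.2.1.2⟩, by
      have := f2 _ x.2.1.1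
      rcases this with h0 | h1
      · exact absurd h0 x.2.2
      · rw [hV_σ _ x.2.1.2, h1, hκκ]⟩⟩
    left_inv := fun x => Subtype.ext (hσσ x.1)
    right_inv := fun x => Subtype.ext (hσσ x.1) }
  rw [Nat.card_congr (Equiv.subtypeEquivRight eR).symm, ← Nat.card_congr e2]
  ring

noncomputable def SolC (k n : ℕ) : ℕ := Nat.card {x : Fin k → ZMod n // ∑ i, x i ^ 2 = 0}

noncomputable def PoddC (k s : ℕ) : ℕ := Nat.card {x : Fin k → ZMod (2^s) //
  (∑ i, x i ^ 2 = 0) ∧ ¬∀ i, (((x i).val : ℕ) : ZMod 2) = 0}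

lemma rho_eq (k n : ℕ) : rho k 0 n = SolC k n := by
  unfold rho SolC
  norm_num

lemma split_s (k s : ℕ) (hs : 2 ≤ s) :
    SolC k (2^s) = 2^k * SolC k (2^(s-2)) + PoddC k s := by
  obtain ⟨t, rfl⟩ : ∃ t, s = t + 2 := ⟨s - 2, by omega⟩
  have hpow : (2:ℕ)^(t+2) = 2^t * 4 := by ring
  classical
  have h1 := card_split (M := Fin k → ZMod (2^(t+2))) (fun x => ∑ i, x i ^ 2 = 0)
    (fun x => ∀ i, (((x i).val : ℕ) : ZMod 2) = 0)
  beta_reduce at h1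
  have h2 := even_part k t (2^(t+2)) hpow
  unfold SolC PoddC
  rw [h1, h2]
  rfl

lemma podd_rec (k t : ℕ) (hk : 0 < k) : PoddC k (t+4) = 2^(k-1) * PoddC k (t+3) := by
  have h2k : (2:ℕ) * 2^(k-1) = 2^k := by
    obtain ⟨k', rfl⟩ : ∃ k', k = k' + 1 := ⟨k-1, by omega⟩
    rw [Nat.add_sub_cancel, pow_succ]
    ring
  have h1 := lift_part k (t+2) (2^(t+4)) (2^(t+3)) (by ring) (by ring)
  have h2 := halve k t (2^(t+4)) (2^(t+3)) (by ring) (by ring)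
  unfold PoddC
  have key : 2 * Nat.card {x : Fin k → ZMod (2^(t+4)) //
      (∑ i, x i ^ 2 = 0) ∧ ¬∀ i, (((x i).val : ℕ) : ZMod 2) = 0}
      = 2 * (2^(k-1) * Nat.card {x : Fin k → ZMod (2^(t+3)) //
        (∑ i, x i ^ 2 = 0) ∧ ¬∀ i, (((x i).val : ℕ) : ZMod 2) = 0}) := by
    rw [h1, h2, ← h2k]
    ring
  exact Nat.eq_of_mul_eq_mul_left two_pos key

lemma podd_closed (k : ℕ) (hk : 0 < k) : ∀ j, PoddC k (3+j) = 2^(j*(k-1)) * PoddC k 3 := by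
  intro j
  induction j with
  | zero => simp
  | succ j ih =>
    have : 3 + (j+1) = j + 4 := by omega
    rw [this, podd_rec k j hk, show j + 3 = 3 + j from by omega, ih, ← mul_assoc, ← pow_add]
    congr 2
    ring

lemma A_recursion (k s : ℕ) (hk : 0 < k) (hs : 4 ≤ s) :
    SolC k (2^s) = 2^k * SolC k (2^(s-2)) + 2^((s-3)*(k-1)) * PoddC k 3 := by
  rw [split_s k s (by omega)]
  congr 1
  have h3 : s = 3 + (s - 3) := by omega
  conv_lhs => rw [h3]
  rw [podd_closed k hk (s-3)]

lemma claim (k : ℕ) (hk : 0 < k) : ∀ j, SolC k (2^(2*j+2)) =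
    (∑ i ∈ Finset.range j, 2^(k*i + (2*j+2-2*i-3)*(k-1))) * PoddC k 3
      + 2^(k*j) * PoddC k 2 + 2^(k*(j+1)) := by
  intro j
  induction j with
  | zero =>
    simp only [Finset.range_zero, Finset.sum_empty, Nat.zero_mul, Nat.mul_zero, pow_zero,
      zero_mul, zero_add, one_mul, Nat.mul_one]
    rw [split_s k 2 (by omega)]
    have h0 : SolC k (2^(2-2)) = 1 := A_one k
    rw [h0]
    omega
  | succ j ih =>
    have hmod : 2*(j+1)+2 = (2*j+2)+2 := by ring
    rw [hmod]
    have hrec := A_recursion k ((2*j+2)+2) hk (by omega)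
    rw [show (2*j+2)+2-2 = 2*j+2 from by omega, show (2*j+2)+2-3 = 2*j+1 from by omega,
      ih] at hrec
    rw [hrec]
    have hsum : ∑ i ∈ Finset.range (j+1), 2^(k*i + ((2*j+2)+2-2*i-3)*(k-1))
        = 2^k * (∑ i ∈ Finset.range j, 2^(k*i + (2*j+2-2*i-3)*(k-1)))
          + 2^((2*j+1)*(k-1)) := by
      rw [Finset.sum_range_succ' (fun i => 2^(k*i + ((2*j+2)+2-2*i-3)*(k-1))) j]
      congr 1
      · rw [Finset.mul_sum]
        refine Finset.sum_congr rfl fun i hi => ?_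
        rw [← pow_add]
        congr 1
        have : (2*j+2)+2-2*(i+1)-3 = 2*j+2-2*i-3 := by omega
        rw [this]
        ring
      · congr 1
        rw [show (2*j+2)+2-2*0-3 = 2*j+1 from by omega]
        ring
    rw [hsum]
    have e1 : (2:ℕ)^(k*(j+1)) = 2^k * 2^(k*j) := by rw [← pow_add]; congr 1; ring
    have e2 : (2:ℕ)^(k*(j+1+1)) = 2^k * 2^(k*(j+1)) := by rw [← pow_add]; congr 1; ring
    rw [e2, e1]
    ring

/-- For even `s ≥ 2`:
`ρ_{k,0}(2^s) = (Σ_{i=0}^{(s−4)/2} 2^{ki+(s−2i−3)(k−1)}) · (ρ_{k,0}(8) − 2^{2k−1})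
+ 2^{k(s−2)/2} · (ρ_{k,0}(4) − 2^k) + 2^{ks/2}` (the sum is empty when `s = 2`). -/
theorem rho_zero_two_pow_s_even (k : ℕ) (hk : 0 < k) (s : ℕ) (hs : 2 ≤ s) (hse : Even s) :
    rho k 0 (2 ^ s) =
      (∑ i ∈ Finset.range ((s - 2) / 2), 2 ^ (k * i + (s - 2 * i - 3) * (k - 1))) *
        (rho k 0 8 - 2 ^ (2 * k - 1))
      + 2 ^ (k * ((s - 2) / 2)) * (rho k 0 4 - 2 ^ k)
      + 2 ^ (k * (s / 2)) := by
  obtain ⟨r, hr⟩ := hse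
  obtain ⟨j, rfl⟩ : ∃ j, s = 2*j+2 := ⟨r - 1, by omega⟩
  have hA3 : rho k 0 8 = PoddC k 3 + 2^(2*k-1) := by
    rw [show (8:ℕ) = 2^3 from by norm_num, rho_eq, split_s k 3 (by omega)]
    have : SolC k (2^(3-2)) = 2^(k-1) := A_two k hk
    rw [this, ← pow_add, show k + (k-1) = 2*k-1 from by omega]
    omega
  have hA2 : rho k 0 4 = PoddC k 2 + 2^k := by
    rw [show (4:ℕ) = 2^2 from by norm_num, rho_eq, split_s k 2 (by omega)]
    have : SolC k (2^(2-2)) = 1 := A_one k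
    rw [this]
    omega
  rw [rho_eq, claim k hk j,
    show rho k 0 8 - 2^(2*k-1) = PoddC k 3 from by omega,
    show rho k 0 4 - 2^k = PoddC k 2 from by omega,
    show (2*j+2-2)/2 = j from by omega, show (2*j+2)/2 = j+1 from by omega]
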